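/- arXiv:math/0104046 — 3 statements merged into one kernel-verified Lean document; each statement's English description precedes it below -/
import Mathlib

section
/- Let X be an integral locally noetherian space with big injective E_X. Then every nonzero torsion-free object of Mod X has a nonzero subobject that is isomorphic to a subobject of E_X. -/
open CategoryTheory CategoryTheory.Limits

universe w v u

section Preliminaries

variable {C : Type u} [Category.{v} C]

/-- An object of a category is *noetherian* if its lattice of subobjects satisfies
the ascending chain condition. -/
def IsNoetherianObject (N : C) : Prop := WellFoundedGT (Subobject N)

/-- A Grothendieck category (non-commutative space) is *locally noetherian* if it has a
set of noetherian generators, i.e. a separating family of noetherian objects. -/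
def LocallyNoetherian (C : Type u) [Category.{v} C] : Prop :=
  ∃ (ι : Type v) (G : ι → C), (∀ i, _root_.IsNoetherianObject (G i)) ∧
    ObjectProperty.IsSeparating (Set.range G)

/-- `M` is a subquotient of `N`: a quotient of a subobject of `N`. -/
def IsSubquotient (N M : C) : Prop :=
  ∃ (S : Subobject N) (f : (S : C) ⟶ M), Epi f

end Preliminaries

/-- Any abelian category has finite biproducts. -/
instance (priority := 100) abelianHasFiniteBiproducts {C : Type u} [Category.{v} C]
    [Abelian C] : HasFiniteBiproducts C :=
  HasFiniteBiproducts.of_hasFiniteProducts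

section BigInjective

variable {C : Type u} [Category.{v} C] [Abelian C] [HasColimits C] [AB5 C]

/-- `E` is the *big injective* making the locally noetherian space `X` (with `Mod X = C`)
an integral space: `E` is an indecomposable injective object whose endomorphism ring is a
division ring, and every object is a subquotient of a coproduct of copies of `E`. -/
structure IsBigInjective (E : C) : Prop where
  injective : Injective E
  nonzero : ¬ IsZero E
  indecomposable : ∀ (A B : C), (E ≅ A ⊞ B) → IsZero A ∨ IsZero B
  division : ∀ f : E ⟶ E, f ≠ 0 → IsIso f
  generates : ∀ M : C, ∃ ι : Type v, IsSubquotient (∐ (fun _ : ι => E)) M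

/-- An object `M` is *torsion* (with respect to the big injective `E`) if `Hom(M, E) = 0`. -/
def IsTorsion (E M : C) : Prop := ∀ f : M ⟶ E, f = 0

/-- An object `M` is *torsion-free* if its only torsion subobject is `0`. -/
def IsTorsionFree (E M : C) : Prop := ∀ S : Subobject M, IsTorsion E (S : C) → S = ⊥

/-- The *rank* of `M`: the length of `Hom(M, E)` as a left module over the division ring
`End(E)`, expressed as the Krull dimension of its lattice of submodules. -/
noncomputable def rank (E M : C) : WithBot ℕ∞ :=
  Order.krullDim (Submodule (End E) (M ⟶ E))

/-- A subobject `L` of `M` is *essential* if every nonzero subobject of `M` meets it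
nontrivially. -/
def IsEssentialSubobject {M : C} (L : Subobject M) : Prop :=
  ∀ S : Subobject M, S ≠ ⊥ → S ⊓ L ≠ ⊥

end BigInjective


section AuxiliaryLemmas

set_option linter.unusedSectionVars false

variable {C : Type u} [Category.{v} C] [Abelian C] [HasColimits C] [AB5 C]

lemma isZero_of_eq_bot {M : C} {S : Subobject M} (h : S = ⊥) : IsZero (S : C) := by
  rw [h]
  exact IsZero.of_iso (isZero_zero C) Subobject.botCoeIsoZero

lemma eq_bot_of_isZero {M : C} {S : Subobject M} (h : IsZero (S : C)) : S = ⊥ := by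
  rw [← Subobject.mk_arrow S, Subobject.mk_eq_bot_iff_zero]
  exact h.eq_zero_of_src _

lemma isZero_of_epi_zero {A B : C} (q : A ⟶ B) [Epi q] (h : q = 0) : IsZero B := by
  rw [IsZero.iff_id_eq_zero]
  apply (cancel_epi q).1
  rw [h]; simp

lemma torsionFree_of_mono {E A B : C} (hB : IsTorsionFree E B) (i : A ⟶ B) [Mono i] :
    IsTorsionFree E A := by
  intro S hS
  have hT : IsTorsion E ((Subobject.mk (S.arrow ≫ i) : Subobject B) : C) := by
    intro f
    have h0 : (Subobject.underlyingIso (S.arrow ≫ i)).inv ≫ f = 0 :=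
      hS ((Subobject.underlyingIso (S.arrow ≫ i)).inv ≫ f)
    calc f = (Subobject.underlyingIso (S.arrow ≫ i)).hom ≫
          ((Subobject.underlyingIso (S.arrow ≫ i)).inv ≫ f) := by simp
      _ = 0 := by rw [h0, comp_zero]
  have hbot := hB _ hT
  apply eq_bot_of_isZero
  exact IsZero.of_iso (isZero_of_eq_bot hbot) (Subobject.underlyingIso (S.arrow ≫ i)).symm

lemma transfer_subobject {E A B : C} (i : A ⟶ B) [Mono i] {S : Subobject A} (hS : S ≠ ⊥)
    (f : (S : C) ⟶ E) (hf : Mono f) :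
    ∃ T : Subobject B, T ≠ ⊥ ∧ ∃ g : (T : C) ⟶ E, Mono g := by
  refine ⟨Subobject.mk (S.arrow ≫ i), ?_, (Subobject.underlyingIso (S.arrow ≫ i)).hom ≫ f, ?_⟩
  · intro h
    exact hS (eq_bot_of_isZero (IsZero.of_iso (isZero_of_eq_bot h)
      (Subobject.underlyingIso (S.arrow ≫ i)).symm))
  · exact mono_comp _ _

lemma mono_of_ne_zero {E A : C} (hEinj : Injective E)
    (hdiv : ∀ f : E ⟶ E, f ≠ 0 → IsIso f) (m : A ⟶ E) [Mono m] (u : A ⟶ E) (hu : u ≠ 0) :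
    Mono u := by
  haveI := hEinj
  have hcomp : m ≫ Injective.factorThru u m = u := Injective.comp_factorThru u m
  have hψ : Injective.factorThru u m ≠ 0 := fun h => hu (by rw [← hcomp, h, comp_zero])
  haveI := hdiv _ hψ
  rw [← hcomp]
  exact mono_comp _ _

lemma top_ne_bot_of_not_isZero {M : C} (h : ¬ IsZero M) : (⊤ : Subobject M) ≠ ⊥ := by
  intro hb
  exact h (IsZero.of_iso (isZero_of_eq_bot hb) (asIso (⊤ : Subobject M).arrow).symm)

lemma torsion_top_of {E M : C} (h : ∀ u : M ⟶ E, u = 0) :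
    IsTorsion E (((⊤ : Subobject M) : C)) := by
  intro f
  have h0 := h ((asIso (⊤ : Subobject M).arrow).inv ≫ f)
  calc f = (asIso (⊤ : Subobject M).arrow).hom ≫
        ((asIso (⊤ : Subobject M).arrow).inv ≫ f) := by simp
    _ = 0 := by rw [h0, comp_zero]

/-- The key induction: if a nonzero torsion-free object is a quotient of a subobject of a
finite power of `E`, then it has a nonzero subobject embedding into `E`. -/
lemma exists_embedding_of_finite_presentation (E : C) (hinj : Injective E)
    (hdiv : ∀ f : E ⟶ E, f ≠ 0 → IsIso f) :
    ∀ (n : ℕ) (A M' : C) (m : A ⟶ ⨁ (fun _ : Fin n => E)), Mono m →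
      ∀ (q : A ⟶ M'), Epi q → ¬ IsZero M' → IsTorsionFree E M' →
      ∃ S : Subobject M', S ≠ ⊥ ∧ ∃ f : (S : C) ⟶ E, Mono f := by
  intro n
  induction n with
  | zero =>
    intro A M' m hm q hq hM' _
    exfalso
    haveI := hm; haveI := hq
    have hzb : IsZero (⨁ (fun _ : Fin 0 => E)) := by
      rw [IsZero.iff_id_eq_zero]
      apply biproduct.hom_ext
      intro j; exact j.elim0
    have hA : IsZero A := by
      rw [IsZero.iff_id_eq_zero]
      apply (cancel_mono m).1
      exact hzb.eq_of_tgt _ _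
    exact hM' (isZero_of_epi_zero q (hA.eq_zero_of_src q))
  | succ n ih =>
    intro A M' m hm q hq hM' htf
    haveI := hm; haveI := hq
    set p : A ⟶ E := m ≫ biproduct.π (fun _ : Fin (n+1) => E) (Fin.last n) with hp
    set k : kernel p ⟶ A := kernel.ι p with hk
    set r : (⨁ fun _ : Fin (n+1) => E) ⟶ ⨁ (fun _ : Fin n => E) :=
      biproduct.lift (fun j => biproduct.π (fun _ : Fin (n+1) => E) j.castSucc) with hr
    have hm' : Mono (k ≫ m ≫ r) := by
      apply Preadditive.mono_of_cancel_zero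
      intro P g hg
      have hcomp : g ≫ (k ≫ m) = 0 := by
        apply biproduct.hom_ext
        intro i
        refine Fin.lastCases ?_ ?_ i
        · have h3 : k ≫ (m ≫ biproduct.π (fun _ : Fin (n+1) => E) (Fin.last n)) = 0 :=
            kernel.condition p
          simp only [Category.assoc, zero_comp]
          rw [h3, comp_zero]
        · intro i
          have := congrArg (· ≫ biproduct.π (fun _ : Fin n => E) i) hg
          simp only [Category.assoc, zero_comp] at this
          rw [hr] at this
          simp only [biproduct.lift_π] at this
          simpa [Category.assoc] using this
      haveI : Mono (k ≫ m) := mono_comp _ _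
      apply (cancel_mono (k ≫ m)).1
      rw [zero_comp]
      simpa [Category.assoc] using hcomp
    by_cases hc : k ≫ q = 0
    · -- `q` factors through the coimage of `p`, which embeds in `E`
      set e : A ⟶ Abelian.coimage p := Abelian.coimage.π p with he
      set μ : Abelian.coimage p ⟶ E := Abelian.factorThruCoimage p with hμ
      set qb : Abelian.coimage p ⟶ M' := cokernel.desc k q hc with hqb
      have heq : e ≫ qb = q := cokernel.π_desc _ _ _
      haveI hqbepi : Epi qb := by
        have : Epi (e ≫ qb) := by rw [heq]; exact hq
        exact epi_of_epi e qb
      by_cases hker : kernel.ι qb = 0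
      · haveI : Mono qb := Preadditive.mono_of_kernel_zero hker
        haveI : IsIso qb := isIso_of_mono_of_epi qb
        refine ⟨⊤, top_ne_bot_of_not_isZero hM', (⊤ : Subobject M').arrow ≫ inv qb ≫ μ, ?_⟩
        exact mono_comp _ _
      · exfalso
        have htor : ∀ u : M' ⟶ E, u = 0 := by
          intro u
          have hqu : qb ≫ u = 0 := by
            by_contra hw
            haveI : Mono (qb ≫ u) := mono_of_ne_zero hinj hdiv μ (qb ≫ u) hw
            apply hker
            apply (cancel_mono (qb ≫ u)).1
            rw [zero_comp, ← Category.assoc, kernel.condition, zero_comp]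
          exact zero_of_epi_comp qb hqu
        have hb := htf ⊤ (torsion_top_of htor)
        exact (top_ne_bot_of_not_isZero hM') hb
    · -- the image of `k ≫ q` is a nonzero torsion-free subobject of `M'`
      set c : kernel p ⟶ M' := k ≫ q with hcdef
      set N := imageSubobject c with hN
      set q₀ : kernel p ⟶ (N : C) := factorThruImageSubobject c with hq₀
      haveI : Epi q₀ := by infer_instance
      have hNnz : ¬ IsZero ((N : C)) := by
        intro h
        apply hc
        show c = 0
        rw [← imageSubobject_arrow_comp c, ← hq₀, h.eq_zero_of_tgt q₀, zero_comp]
      have htfN : IsTorsionFree E (N : C) := torsionFree_of_mono htf N.arrow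
      obtain ⟨S₀, hS₀, f₀, hf₀⟩ := ih (kernel p) (N : C) (k ≫ m ≫ r) hm' q₀
        inferInstance hNnz htfN
      exact transfer_subobject N.arrow hS₀ f₀ hf₀

/-- AB5 covering lemma: pulling back the canonical filtered-colimit presentation along any
morphism yields a jointly epimorphic family. -/
lemma pullback_cover {J : Type v} [SmallCategory J] [IsFiltered J] (G : J ⥤ C) {A Z : C}
    (X : A ⟶ colimit G) (t : A ⟶ Z)
    (h : ∀ j : J, pullback.fst X (colimit.ι G j) ≫ t = 0) : t = 0 := by
  classical
  let cA : J ⥤ C := (Functor.const J).obj A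
  let cT : J ⥤ C := (Functor.const J).obj (colimit G)
  let ξ : cA ⟶ cT := (Functor.const J).map X
  let γ : G ⟶ cT := (colimit.cocone G).ι
  have hP : IsPullback (pullback.fst ξ γ) (pullback.snd ξ γ) ξ γ := IsPullback.of_hasPullback ξ γ
  have hP2 := hP.map (colim (J := J) (C := C))
  let ccA : Cocone cA :=
    { pt := A, ι := { app := fun _ => 𝟙 A, naturality := by intros; simp [cA] } }
  let ccT : Cocone cT :=
    { pt := colimit G, ι := { app := fun _ => 𝟙 _, naturality := by intros; simp [cT] } }
  let dA : colimit cA ⟶ A := colimit.desc cA ccA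
  let dT : colimit cT ⟶ colimit G := colimit.desc cT ccT
  obtain ⟨j0⟩ := IsFiltered.nonempty (C := J)
  have keyT : ∀ i j : J, colimit.ι cT i = colimit.ι cT j := by
    intro i j
    have h1 : colimit.ι cT i = colimit.ι cT (IsFiltered.max i j) := by
      rw [← colimit.w cT (IsFiltered.leftToMax i j)]
      simp [cT]
    have h2 : colimit.ι cT j = colimit.ι cT (IsFiltered.max i j) := by
      rw [← colimit.w cT (IsFiltered.rightToMax i j)]
      simp [cT]
    rw [h1, h2]
  haveI hdT : IsIso dT := by
    refine ⟨colimit.ι cT j0, ?_, ?_⟩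
    · apply colimit.hom_ext
      intro j
      rw [colimit.ι_desc_assoc]
      have E3 : ccT.ι.app j ≫ colimit.ι cT j0 = colimit.ι cT j0 := Category.id_comp _
      rw [E3, Category.comp_id]
      exact keyT j0 j
    · rw [colimit.ι_desc]
      rfl
  have hγdT : colim.map γ ≫ dT = 𝟙 (colimit G) := by
    apply colimit.hom_ext
    intro j
    rw [← Category.assoc, colimit.ι_map, Category.assoc, colimit.ι_desc]
    rfl
  have hγiso : IsIso (colim.map γ) := by
    have h5 : colim.map γ = inv dT := by
      calc colim.map γ = colim.map γ ≫ dT ≫ inv dT := by simp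
        _ = inv dT := by rw [← Category.assoc, hγdT]; simp
    rw [h5]; infer_instance
  have hfst_iso : IsIso (colim.map (pullback.fst ξ γ)) := by
    refine ⟨hP2.lift (𝟙 _) (colim.map ξ ≫ inv (colim.map γ)) (by simp), ?_, ?_⟩
    · apply hP2.hom_ext
      · simp
      · rw [Category.assoc, hP2.lift_snd]
        rw [Category.id_comp, ← Category.assoc, hP2.w]
        simp
    · exact hP2.lift_fst _ _ _
  haveI hdAepi : Epi dA := by
    have hsplit : IsSplitEpi dA := IsSplitEpi.mk' ⟨colimit.ι cA j0, by rw [colimit.ι_desc]⟩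
    exact hsplit.epi
  haveI := hfst_iso
  have hbt : (colim.map (pullback.fst ξ γ) ≫ dA) ≫ t = 0 := by
    apply colimit.hom_ext
    intro j
    rw [comp_zero]
    have happ : (pullback.fst ξ γ).app j ≫ t = 0 := by
      show ((evaluation J C).obj j).map (pullback.fst ξ γ) ≫ t = 0
      rw [← PreservesPullback.iso_hom_fst ((evaluation J C).obj j) ξ γ, Category.assoc]
      have h4 : pullback.fst (((evaluation J C).obj j).map ξ)
          (((evaluation J C).obj j).map γ) ≫ t = 0 := h j
      rw [h4, comp_zero]
    simp only [Category.assoc]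
    rw [colimit.ι_map_assoc, colimit.ι_desc_assoc]
    have E : ccA.ι.app j ≫ t = t := Category.id_comp t
    rw [E]
    exact happ
  exact zero_of_epi_comp (colim.map (pullback.fst ξ γ) ≫ dA) hbt

end AuxiliaryLemmas

/-- Theorem 3.12(1). In an integral locally noetherian space with big
injective `E`, every nonzero torsion-free object has a nonzero subobject isomorphic to a
subobject of `E` (equivalently, a nonzero subobject that embeds into `E`). -/
theorem statement4 {C : Type u} [Category.{v} C] [Abelian C] [HasColimits C] [AB5 C]
    (hX : LocallyNoetherian C) (E : C) (hE : IsBigInjective E)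
    (M : C) (hM0 : ¬ IsZero M) (hMtf : IsTorsionFree E M) :
    ∃ S : Subobject M, S ≠ ⊥ ∧ ∃ f : (S : C) ⟶ E, Mono f := by
  classical
  obtain ⟨ι, S, w, hw⟩ := hE.generates M
  haveI := hw
  let F : Discrete ι ⥤ C := Discrete.functor (fun _ => E)
  let G : Finset (Discrete ι) ⥤ C := CoproductsFromFiniteFiltered.liftToFinsetObj F
  let e : (∐ (fun _ : ι => E)) ≅ colimit G :=
    colimit.isoColimitCocone (CoproductsFromFiniteFiltered.liftToFinsetColimitCocone F)
  let X : (S : C) ⟶ colimit G := S.arrow ≫ e.hom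
  have hex : ∃ j : Finset (Discrete ι), pullback.fst X (colimit.ι G j) ≫ w ≠ 0 := by
    by_contra hall
    push_neg at hall
    have hw0 : w = 0 := pullback_cover G X w hall
    exact hM0 (isZero_of_epi_zero w hw0)
  obtain ⟨j, hj⟩ := hex
  haveI : Mono X := mono_comp _ _
  haveI : Mono (pullback.snd X (colimit.ι G j)) := inferInstance
  let n := Fintype.card { x // x ∈ j }
  let σ : Fin n ≃ { x // x ∈ j } := (Fintype.equivFin _).symm
  let ψ : (⨁ (fun _ : { x // x ∈ j } => E)) ⟶ ⨁ (fun _ : Fin n => E) :=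
    biproduct.lift (fun i => biproduct.π (fun _ : { x // x ∈ j } => E) (σ i))
  have hψ : Mono ψ := by
    apply Preadditive.mono_of_cancel_zero
    intro P g hg
    apply biproduct.hom_ext
    intro x
    have := congrArg (· ≫ biproduct.π (fun _ : Fin n => E) (σ.symm x)) hg
    simp only [Category.assoc, zero_comp] at this
    simp only [ψ, biproduct.lift_π] at this
    simpa [σ.apply_symm_apply] using this
  let ρ : G.obj j ⟶ ⨁ (fun _ : { x // x ∈ j } => E) :=
    (biproduct.isoCoproduct (fun _ : { x // x ∈ j } => E)).inv
  haveI : Mono ρ := ⟨fun g h w => by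
    let κ : (⨁ (fun _ : { x // x ∈ j } => E)) ⟶ G.obj j :=
      (biproduct.isoCoproduct (fun _ : { x // x ∈ j } => E)).hom
    have hid : ρ ≫ κ = 𝟙 (G.obj j) := (biproduct.isoCoproduct (fun _ : { x // x ∈ j } => E)).inv_hom_id
    calc g = g ≫ ρ ≫ κ := by rw [hid, Category.comp_id]
      _ = h ≫ ρ ≫ κ := by rw [← Category.assoc, w, Category.assoc]
      _ = h := by rw [hid, Category.comp_id]⟩
  let mj : pullback X (colimit.ι G j) ⟶ ⨁ (fun _ : Fin n => E) :=
    pullback.snd X (colimit.ι G j) ≫ ρ ≫ ψ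
  haveI hmj : Mono mj := by
    haveI := hψ
    apply mono_comp
  let c : pullback X (colimit.ι G j) ⟶ M := pullback.fst X (colimit.ι G j) ≫ w
  let N := imageSubobject c
  let q₀ : pullback X (colimit.ι G j) ⟶ (N : C) := factorThruImageSubobject c
  haveI : Epi q₀ := inferInstance
  have hNnz : ¬ IsZero ((N : C)) := by
    intro hzero
    apply hj
    show c = 0
    rw [← imageSubobject_arrow_comp c]
    rw [show factorThruImageSubobject c = q₀ from rfl, hzero.eq_zero_of_tgt q₀, zero_comp]
  have htfN : IsTorsionFree E (N : C) := torsionFree_of_mono hMtf N.arrow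
  obtain ⟨S₀, hS₀, f₀, hf₀⟩ := exists_embedding_of_finite_presentation E
    hE.injective hE.division n _ (N : C) mj hmj q₀ inferInstance hNnz htfN
  exact transfer_subobject N.arrow hS₀ f₀ hf₀
end

section
/- Let X be an integral locally noetherian space with big injective E_X. Then any injective object of Mod X that is an essential extension of a torsion-free object of rank one is isomorphic to E_X; in particular, E_X is the unique indecomposable injective object of rank one up to isomorphism. -/
open CategoryTheory CategoryTheory.Limits

universe w v u

section Aux

/-- From Krull dimension one of the submodule lattice: the module is nonzero and
every nonzero element spans. -/
lemma rank_one_aux {R V : Type*} [Ring R] [AddCommGroup V] [Module R V]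
    (h : Order.krullDim (Submodule R V) = ((1 : ℕ∞) : WithBot ℕ∞)) :
    (∃ v : V, v ≠ 0) ∧ ∀ v : V, v ≠ 0 → Submodule.span R {v} = ⊤ := by
  constructor
  · by_contra hc
    push_neg at hc
    haveI : Subsingleton V := ⟨fun a b => by rw [hc a, hc b]⟩
    have := Order.krullDim_nonpos_of_subsingleton (α := Submodule R V)
    rw [h] at this
    norm_num at this
  · intro v hv
    by_contra hne
    have h1 : (⊥ : Submodule R V) < Submodule.span R {v} := by
      rw [bot_lt_iff_ne_bot]
      intro hb
      have hm : v ∈ Submodule.span R {v} := Submodule.mem_span_singleton_self v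
      rw [hb, Submodule.mem_bot] at hm
      exact hv hm
    have h2 : Submodule.span R {v} < ⊤ := lt_top_iff_ne_top.mpr hne
    let p : LTSeries (Submodule R V) :=
      RelSeries.snoc (RelSeries.snoc (RelSeries.singleton _ ⊥) (Submodule.span R {v})
        (by simpa using h1)) ⊤ (by simpa using h2)
    have hle := Order.LTSeries.length_le_krullDim p
    rw [h] at hle
    have hlen : p.length = 2 := rfl
    rw [hlen] at hle
    norm_num at hle

/-- A split monomorphism into an indecomposable object, from a nonzero object,
is an isomorphism. -/
lemma isIso_of_splitMono_indec {C : Type u} [Category.{v} C] [Abelian C]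
    {A B : C} (h : A ⟶ B) [IsSplitMono h]
    (ind : ∀ X Y : C, (B ≅ X ⊞ Y) → IsZero X ∨ IsZero Y) (hA : ¬ IsZero A) : IsIso h := by
  have iso : B ≅ A ⊞ cokernel h :=
    biprod.uniqueUpToIso A (cokernel h)
      (isBilimitBinaryBiconeOfIsSplitMonoOfCokernel (cokernelIsCokernel h))
  rcases ind A (cokernel h) iso with hz | hz
  · exact absurd hz hA
  · have hπ : cokernel.π h = 0 := hz.eq_of_tgt _ _
    haveI : Epi h := CategoryTheory.Abelian.epi_of_cokernel_π_eq_zero h hπ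
    exact isIso_of_mono_of_epi h

/-- A subobject with zero underlying arrow is the bottom subobject. -/
lemma subobject_eq_bot_of_arrow_zero {C : Type u} [Category.{v} C] [Abelian C]
    {X : C} (S : Subobject X) (hS : S.arrow = 0) : S = ⊥ := by
  rw [← Subobject.mk_arrow S]
  exact (Subobject.mk_eq_bot_iff_zero).mpr hS

/-- A morphism whose kernel subobject is ⊥ is a monomorphism. -/
lemma mono_of_kernelSubobject_bot {C : Type u} [Category.{v} C] [Abelian C]
    {X Y : C} (f : X ⟶ Y) (h : kernelSubobject f = ⊥) : Mono f := by
  have harr : (kernelSubobject f).arrow = 0 := by rw [h]; exact Subobject.bot_arrow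
  have hk : kernel.ι f = 0 := by
    rw [← kernelSubobject_arrow' f, harr, comp_zero]
  exact CategoryTheory.Abelian.mono_of_kernel_ι_eq_zero f hk

/-- An object admitting a nonzero morphism out of it is not zero; stated via a mono into it. -/
lemma not_isZero_of_subobject_hom {C : Type u} [Category.{v} C] [Abelian C]
    {J E : C} (L : Subobject J) (f : (L : C) ⟶ E) (hf : f ≠ 0) : ¬ IsZero J := by
  intro hz
  have harr : L.arrow = 0 := hz.eq_of_tgt _ _
  have hid : 𝟙 (L : C) = 0 := by
    rw [← cancel_mono L.arrow, harr, comp_zero, zero_comp]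
  exact hf (((IsZero.iff_id_eq_zero _).mpr hid).eq_of_src f 0)

end Aux


/-- Theorem 3.12(3),(4). In an integral locally noetherian space with big
injective `E`: every injective object which is an essential extension of a torsion-free
object of rank one is isomorphic to `E`; in particular, `E` is the unique indecomposable
injective of rank one, up to isomorphism. -/


theorem statement6 {C : Type u} [Category.{v} C] [Abelian C] [HasColimits C] [AB5 C]
    (hX : LocallyNoetherian C) (E : C) (hE : IsBigInjective E) :
    (∀ (J : C), Injective J → ∀ L : Subobject J, IsEssentialSubobject L →
        IsTorsionFree E (L : C) → rank E (L : C) = (1 : ℕ∞) → Nonempty (J ≅ E)) ∧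
    (∀ (J : C), Injective J → ¬ IsZero J →
        (∀ (A B : C), (J ≅ A ⊞ B) → IsZero A ∨ IsZero B) →
        rank E J = (1 : ℕ∞) → Nonempty (J ≅ E)) := by
  have key1 : ∀ (J : C), Injective J → ∀ L : Subobject J, IsEssentialSubobject L →
      IsTorsionFree E (L : C) → rank E (L : C) = (1 : ℕ∞) → Nonempty (J ≅ E) := by
    intro J hJ L hess htf hrank
    haveI := hJ
    haveI := hE.injective
    obtain ⟨⟨f, hf⟩, hspan⟩ := rank_one_aux
      (show Order.krullDim (Submodule (End E) ((L : C) ⟶ E)) = _ from hrank)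
    -- every map to E out of a subobject of (L : C) factoring through the kernel of f is zero
    have hker : kernelSubobject f = ⊥ := by
      apply htf
      intro t
      have hg : (kernelSubobject f).arrow ≫ Injective.factorThru t (kernelSubobject f).arrow = t :=
        Injective.comp_factorThru t (kernelSubobject f).arrow
      have hmem : Injective.factorThru t (kernelSubobject f).arrow ∈
          Submodule.span (End E) {f} := by
        rw [hspan f hf]; trivial
      obtain ⟨c, hc⟩ := Submodule.mem_span_singleton.mp hmem
      have hc' : f ≫ c = Injective.factorThru t (kernelSubobject f).arrow := hc
      rw [← hg, ← hc', ← Category.assoc, kernelSubobject_arrow_comp, zero_comp]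
    haveI : Mono f := mono_of_kernelSubobject_bot f hker
    -- extend f to g : J ⟶ E
    set g := Injective.factorThru f L.arrow with hgdef
    have hgf : L.arrow ≫ g = f := Injective.comp_factorThru f L.arrow
    -- the kernel of g meets L trivially
    have hinf : kernelSubobject g ⊓ L = ⊥ := by
      apply subobject_eq_bot_of_arrow_zero
      have harr1 : Subobject.ofLE _ L (inf_le_right (a := kernelSubobject g) (b := L)) ≫
          L.arrow = (kernelSubobject g ⊓ L).arrow := Subobject.ofLE_arrow _
      have harr2 : Subobject.ofLE _ (kernelSubobject g)
          (inf_le_left (a := kernelSubobject g) (b := L)) ≫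
          (kernelSubobject g).arrow = (kernelSubobject g ⊓ L).arrow := Subobject.ofLE_arrow _
      have h0 : Subobject.ofLE _ L (inf_le_right (a := kernelSubobject g) (b := L)) ≫ f = 0 := by
        rw [← hgf, ← Category.assoc, harr1, ← harr2, Category.assoc,
          kernelSubobject_arrow_comp, comp_zero]
      have hu : Subobject.ofLE _ L (inf_le_right (a := kernelSubobject g) (b := L)) = 0 :=
        zero_of_comp_mono f h0
      rw [← harr1, hu, zero_comp]
    have hkerg : kernelSubobject g = ⊥ := by
      by_contra hne
      exact hess _ hne hinf
    haveI : Mono g := mono_of_kernelSubobject_bot g hkerg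
    haveI : IsSplitMono g := IsSplitMono.mk'
      ⟨Injective.factorThru (𝟙 J) g, Injective.comp_factorThru (𝟙 J) g⟩
    have hJnz : ¬ IsZero J := not_isZero_of_subobject_hom L f hf
    haveI : IsIso g := isIso_of_splitMono_indec g hE.indecomposable hJnz
    exact ⟨asIso g⟩
  constructor
  · exact key1
  · intro J hJ hJnz hind hrank
    haveI := hJ
    obtain ⟨⟨f, hf⟩, -⟩ := rank_one_aux
      (show Order.krullDim (Submodule (End E) (J ⟶ E)) = _ from hrank)
    obtain ⟨ι, S, p, hp⟩ := hE.generates J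
    haveI := hp
    set q := Injective.factorThru p S.arrow with hqdef
    have hq : S.arrow ≫ q = p := Injective.comp_factorThru p S.arrow
    have hqf : q ≫ f ≠ 0 := by
      intro h0
      apply hf
      have hpf : p ≫ f = 0 := by rw [← hq, Category.assoc, h0, comp_zero]
      exact (cancel_epi p).mp (by rw [hpf, comp_zero])
    have hex : ∃ i : ι, Sigma.ι (fun _ : ι => E) i ≫ (q ≫ f) ≠ 0 := by
      by_contra hall
      push_neg at hall
      exact hqf (Sigma.hom_ext _ _ fun i => by rw [hall i, comp_zero])
    obtain ⟨i, hi⟩ := hex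
    set h := Sigma.ι (fun _ : ι => E) i ≫ q with hhdef
    have hu : h ≫ f ≠ 0 := by
      rw [hhdef, Category.assoc]
      exact hi
    haveI : IsIso (h ≫ f) := hE.division _ hu
    haveI : IsSplitMono h := IsSplitMono.mk'
      ⟨f ≫ inv (h ≫ f), by rw [← Category.assoc]; exact IsIso.hom_inv_id _⟩
    haveI : IsIso h := isIso_of_splitMono_indec h hind hE.nonzero
    exact ⟨(asIso h).symm⟩
end

section
/- Let X be an integral locally noetherian space with big injective E_X. If L is an essential subobject of an object M of Mod X, then rank L = rank M. -/
open CategoryTheory CategoryTheory.Limits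

universe w v u

section Aux

variable {C : Type u} [Category.{v} C] [Abelian C]

namespace S8

/-- Essentialness of a subobject, in "inf" form. -/
def Ess {T : C} (W : Subobject T) : Prop := ∀ V : Subobject T, V ⊓ W = ⊥ → V = ⊥

lemma isZero_of_mono_zero {A B : C} (f : A ⟶ B) [Mono f] (hf : f = 0) : IsZero A := by
  rw [IsZero.iff_id_eq_zero]
  apply (cancel_mono f).1
  rw [hf, comp_zero, zero_comp]

lemma isZero_of_epi_zero {A B : C} (f : A ⟶ B) [Epi f] (hf : f = 0) : IsZero B := by
  rw [IsZero.iff_id_eq_zero]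
  apply (cancel_epi f).1
  rw [hf, comp_zero, zero_comp]

lemma eq_bot_of_arrow_zero {B : C} {P : Subobject B} (h : P.arrow = 0) : P = ⊥ := by
  conv_lhs => rw [← Subobject.mk_arrow P]
  exact Subobject.mk_eq_bot_iff_zero.2 h

lemma arrow_ne_zero_of_ne_bot {B : C} {P : Subobject B} (h : P ≠ ⊥) : P.arrow ≠ 0 :=
  fun h0 => h (eq_bot_of_arrow_zero h0)

lemma arrow_comp_eq_zero_of_le {A B : C} {P W : Subobject A} (h : P ≤ W) {g : A ⟶ B}
    (hg : W.arrow ≫ g = 0) : P.arrow ≫ g = 0 := by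
  rw [← Subobject.ofLE_arrow h, Category.assoc, hg, comp_zero]

lemma arrow_comp_eq_zero_of_le_kernelSubobject {A B : C} (f : A ⟶ B) {P : Subobject A}
    (h : P ≤ kernelSubobject f) : P.arrow ≫ f = 0 :=
  arrow_comp_eq_zero_of_le h (kernelSubobject_arrow_comp f)

/-- Essentialness restricts to subobjects: if `W` is essential in `T` and `K` is any
subobject of `T`, then the preimage of `W` in `K` is essential in `K`. -/
lemma ess_restrict {T : C} {W : Subobject T} (hW : Ess W) (K : Subobject T) :
    Ess (kernelSubobject (K.arrow ≫ cokernel.π W.arrow)) := by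
  intro U hU
  by_contra hUne
  set u := U.arrow ≫ K.arrow with hu
  haveI : Mono u := mono_comp _ _
  have hU' : Subobject.mk u ≠ ⊥ := by
    rw [Ne, Subobject.mk_eq_bot_iff_zero]
    intro h
    exact hUne (eq_bot_of_arrow_zero ((cancel_mono K.arrow).1 (by rw [← hu, h, zero_comp])))
  have hZ : Subobject.mk u ⊓ W ≠ ⊥ := fun h => hU' (hW _ h)
  set Z := Subobject.mk u ⊓ W with hZdef
  -- `e : Z ⟶ U` over `K.arrow ≫ ...`
  let e : (Z : C) ⟶ (U : C) :=
    Subobject.ofLE Z (Subobject.mk u) inf_le_left ≫ (Subobject.underlyingIso u).hom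
  have he : e ≫ u = Z.arrow := by
    simp only [e, Category.assoc, Subobject.underlyingIso_hom_comp_eq_mk,
      Subobject.ofLE_arrow]
  set z := e ≫ U.arrow with hz
  have hzK : z ≫ K.arrow = Z.arrow := by rw [hz, Category.assoc, ← hu, he]
  haveI : Mono z := by
    have : Mono (z ≫ K.arrow) := by rw [hzK]; infer_instance
    exact mono_of_mono z K.arrow
  have hmkz : Subobject.mk z ≤ U ⊓ kernelSubobject (K.arrow ≫ cokernel.π W.arrow) := by
    refine le_inf ?_ ?_
    · exact Subobject.mk_le_of_comm e hz.symm
    · apply Limits.le_kernelSubobject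
      have : (Subobject.mk z).arrow = (Subobject.underlyingIso z).hom ≫ z :=
        (Subobject.underlyingIso_hom_comp_eq_mk z).symm
      rw [this, Category.assoc, ← Category.assoc z, hzK]
      have hZW : Z.arrow ≫ cokernel.π W.arrow = 0 :=
        arrow_comp_eq_zero_of_le (inf_le_right : Z ≤ W) (cokernel.condition W.arrow)
      rw [hZW, comp_zero]
  rw [hU] at hmkz
  have : Subobject.mk z = ⊥ := le_bot_iff.1 hmkz
  rw [Subobject.mk_eq_bot_iff_zero] at this
  exact hZ (eq_bot_of_arrow_zero (by rw [← hzK, this, zero_comp]))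

/-- Pulling back an essential subobject along an epimorphism yields an essential subobject. -/
lemma ess_pullback_epi {T M : C} (p : T ⟶ M) [Epi p] {L : Subobject M}
    (hL : ∀ S : Subobject M, S ≠ ⊥ → S ⊓ L ≠ ⊥) :
    Ess (kernelSubobject (p ≫ cokernel.π L.arrow)) := by
  intro V hV
  by_contra hVne
  set W := kernelSubobject (p ≫ cokernel.π L.arrow) with hW
  set q := V.arrow ≫ p with hq
  by_cases hq0 : q = 0
  · -- then V ≤ W, so V ⊓ W = V ≠ ⊥
    have : V ≤ W := by
      apply Limits.le_kernelSubobject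
      rw [← Category.assoc, ← hq, hq0, zero_comp]
    rw [inf_eq_left.2 this] at hV
    exact hVne hV
  · set N := imageSubobject q with hN
    have hNne : N ≠ ⊥ := by
      intro h
      apply hq0
      rw [← imageSubobject_arrow_comp q]
      have : N.arrow = 0 := by rw [← hN] at *; rw [h, Subobject.bot_arrow]
      rw [hN] at this
      rw [this, comp_zero]
    have hZ : N ⊓ L ≠ ⊥ := hL N hNne
    set Z := N ⊓ L with hZdef
    set e := factorThruImageSubobject q with he
    set t := Subobject.ofLE Z N inf_le_left with ht
    have htN : t ≫ N.arrow = Z.arrow := Subobject.ofLE_arrow _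
    -- pull back Z along the epimorphism e
    set Pb := pullback t e with hPb
    have hcond : (pullback.fst t e) ≫ t = (pullback.snd t e) ≫ e := pullback.condition
    haveI : Epi (pullback.fst t e) := Abelian.epi_pullback_of_epi_g t e
    set y := pullback.snd t e ≫ V.arrow with hy
    haveI : Mono y := mono_comp _ _
    have h1 : e ≫ N.arrow = q := imageSubobject_arrow_comp q
    have hyP : y ≫ p = pullback.fst t e ≫ Z.arrow := by
      calc y ≫ p = pullback.snd t e ≫ q := by rw [hy, Category.assoc, ← hq]
        _ = pullback.snd t e ≫ e ≫ N.arrow := by rw [h1]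
        _ = (pullback.fst t e ≫ t) ≫ N.arrow := by rw [← Category.assoc, ← hcond]
        _ = pullback.fst t e ≫ Z.arrow := by rw [Category.assoc, htN]
    have hmky : Subobject.mk y ≤ V ⊓ W := by
      refine le_inf (Subobject.mk_le_of_comm (pullback.snd t e) hy.symm) ?_
      apply Limits.le_kernelSubobject
      have harr : (Subobject.mk y).arrow = (Subobject.underlyingIso y).hom ≫ y :=
        (Subobject.underlyingIso_hom_comp_eq_mk y).symm
      rw [harr, Category.assoc, ← Category.assoc y, hyP]
      have : Z.arrow ≫ cokernel.π L.arrow = 0 :=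
        arrow_comp_eq_zero_of_le (inf_le_right : Z ≤ L) (cokernel.condition L.arrow)
      simp only [Category.assoc, this, comp_zero]
    rw [hV] at hmky
    rw [le_bot_iff, Subobject.mk_eq_bot_iff_zero] at hmky
    -- y = 0 forces Z = ⊥, contradiction
    have hsnd : pullback.snd t e = 0 := by
      have := hmky
      rw [hy] at this
      exact (cancel_mono V.arrow).1 (by rw [this, zero_comp])
    haveI : Mono (pullback.snd t e) := by infer_instance
    have hPbz : IsZero Pb := isZero_of_mono_zero _ hsnd
    have hfst : pullback.fst t e = 0 := hPbz.eq_of_src _ _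
    have : IsZero (Z : C) := isZero_of_epi_zero (pullback.fst t e) hfst
    exact hZ (eq_bot_of_arrow_zero (this.eq_of_src _ _))

/-- The key finite-rank lemma: if `T` embeds in a finite direct sum of copies of `E`,
`W` is an essential subobject of `T`, and `g : T ⟶ E` vanishes on `W`, then `g = 0`. -/
lemma CL {E : C} (hInj : Injective E) (hdiv : ∀ f : E ⟶ E, f ≠ 0 → IsIso f) :
    ∀ (n : ℕ) (T : C) (m : T ⟶ ⨁ (fun _ : Fin n => E)), Mono m →
      ∀ (W : Subobject T), Ess W → ∀ g : T ⟶ E, W.arrow ≫ g = 0 → g = 0 := by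
  intro n
  induction n with
  | zero =>
    intro T m hm W _ g _
    have hzero : IsZero (⨁ (fun _ : Fin 0 => E)) := by
      rw [IsZero.iff_id_eq_zero, ← biproduct.total]
      simp
    haveI := hm
    have hTz : IsZero T := isZero_of_mono_zero m (hzero.eq_of_tgt m 0)
    exact hTz.eq_of_src g 0
  | succ n ih =>
    intro T m hm W hW g hg
    haveI := hm
    haveI := hInj
    set G := Injective.factorThru g m with hG
    have hmg : m ≫ G = g := Injective.comp_factorThru g m
    by_cases hu : ∀ i : Fin (n + 1), biproduct.ι (fun _ : Fin (n+1) => E) i ≫ G = 0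
    · have : G = 0 := by
        apply biproduct.hom_ext'
        intro j
        rw [hu j, comp_zero]
      rw [← hmg, this, comp_zero]
    · push_neg at hu
      obtain ⟨i₀, hi₀⟩ := hu
      haveI hiso : IsIso (biproduct.ι (fun _ : Fin (n+1) => E) i₀ ≫ G) := hdiv _ hi₀
      set π' : (⨁ (fun _ : Fin (n+1) => E)) ⟶ ⨁ (fun _ : Fin n => E) :=
        biproduct.lift (fun j => biproduct.π (fun _ : Fin (n+1) => E) (i₀.succAbove j)) with hπ'
      set ρ := m ≫ π' with hρ
      -- the kernel of ρ meets W trivially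
      have hker : kernelSubobject ρ ⊓ W = ⊥ := by
        set V := kernelSubobject ρ ⊓ W with hV
        set b := V.arrow ≫ m with hb
        have hb1 : ∀ j : Fin n, b ≫ biproduct.π (fun _ : Fin (n+1) => E) (i₀.succAbove j) = 0 := by
          intro j
          have h0 : V.arrow ≫ ρ = 0 :=
            arrow_comp_eq_zero_of_le_kernelSubobject ρ (inf_le_left : V ≤ kernelSubobject ρ)
          have := congrArg (fun x => x ≫ biproduct.π (fun _ : Fin n => E) j) h0
          simpa [hρ, hπ', hb, Category.assoc] using this
        have hb2 : b ≫ G = 0 := by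
          rw [hb, Category.assoc, hmg]
          exact arrow_comp_eq_zero_of_le (inf_le_right : V ≤ W) hg
        have hbdec : b = (b ≫ biproduct.π (fun _ : Fin (n+1) => E) i₀) ≫
            biproduct.ι (fun _ : Fin (n+1) => E) i₀ := by
          have htot := biproduct.total (f := fun _ : Fin (n+1) => E)
          calc b = b ≫ 𝟙 _ := by rw [Category.comp_id]
            _ = b ≫ ∑ j : Fin (n+1), biproduct.π (fun _ : Fin (n+1) => E) j ≫
                  biproduct.ι (fun _ : Fin (n+1) => E) j := by rw [htot]
            _ = ∑ j : Fin (n+1), b ≫ biproduct.π (fun _ : Fin (n+1) => E) j ≫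
                  biproduct.ι (fun _ : Fin (n+1) => E) j := by
                rw [Preadditive.comp_sum]
            _ = (b ≫ biproduct.π (fun _ : Fin (n+1) => E) i₀) ≫
                  biproduct.ι (fun _ : Fin (n+1) => E) i₀ := by
                rw [Finset.sum_eq_single i₀]
                · simp only [hb, Category.assoc]
                · intro j _ hj
                  obtain ⟨k, hk⟩ := Fin.exists_succAbove_eq hj
                  rw [← hk, ← Category.assoc, hb1 k, zero_comp]
                · intro h; exact absurd (Finset.mem_univ i₀) h
        have hbπ : b ≫ biproduct.π (fun _ : Fin (n+1) => E) i₀ = 0 := by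
          have : (b ≫ biproduct.π (fun _ : Fin (n+1) => E) i₀) ≫
              (biproduct.ι (fun _ : Fin (n+1) => E) i₀ ≫ G) = 0 := by
            rw [← Category.assoc, ← hbdec]
            exact hb2
          exact (cancel_mono (biproduct.ι (fun _ : Fin (n+1) => E) i₀ ≫ G)).1
            (by rw [this, zero_comp])
        have hbz : b = 0 := by rw [hbdec, hbπ, zero_comp]
        apply eq_bot_of_arrow_zero
        exact (cancel_mono m).1 (by rw [← hb, hbz, zero_comp])
      have hkerbot : kernelSubobject ρ = ⊥ := hW _ hker
      haveI : Mono ρ := by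
        apply Abelian.mono_of_kernel_ι_eq_zero
        have harr : (kernelSubobject ρ).arrow = 0 := by rw [hkerbot, Subobject.bot_arrow]
        rw [← kernelSubobject_arrow' ρ, harr, comp_zero]
      exact ih T ρ inferInstance W hW g hg

end S8

section Machine
variable {C : Type u} [Category.{v} C] [Abelian C] [HasColimits C]

namespace S8

variable (E : C) (ι' : Type v)

/-- The inclusion of a finite subcoproduct. -/
noncomputable def leg (F : Finset ι') : (⨁ fun _ : Fin F.card => E) ⟶ ∐ (fun _ : ι' => E) :=
  biproduct.desc fun j => Sigma.ι (fun _ : ι' => E) ((F.equivFin.symm j) : ι')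

open scoped Classical in
/-- A retraction of `leg`. -/
noncomputable def retr (F : Finset ι') : (∐ fun _ : ι' => E) ⟶ ⨁ fun _ : Fin F.card => E :=
  Sigma.desc fun i =>
    if h : i ∈ F then biproduct.ι (fun _ : Fin F.card => E) (F.equivFin ⟨i, h⟩) else 0

open scoped Classical in
lemma leg_retr (F : Finset ι') : leg E ι' F ≫ retr E ι' F = 𝟙 _ := by
  apply biproduct.hom_ext'
  intro j
  rw [Category.comp_id, ← Category.assoc]
  simp only [leg, biproduct.ι_desc]
  simp only [retr]
  rw [colimit.ι_desc]
  dsimp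
  split
  next h =>
    congr 1
    exact F.equivFin.apply_symm_apply j
  next h => exact absurd (Subtype.coe_prop _) h

instance mono_leg (F : Finset ι') : Mono (leg E ι' F) := by
  haveI : IsSplitMono (leg E ι' F) := IsSplitMono.mk' ⟨retr E ι' F, leg_retr E ι' F⟩
  infer_instance

lemma sigma_comp_cokernel_π {F : Finset ι'} {c : ι'} (hc : c ∈ F) :
    Sigma.ι (fun _ : ι' => E) c ≫ cokernel.π (leg E ι' F) = 0 := by
  have hfac : Sigma.ι (fun _ : ι' => E) c =
      biproduct.ι (fun _ : Fin F.card => E) (F.equivFin ⟨c, hc⟩) ≫ leg E ι' F := by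
    simp [leg]
  rw [hfac, Category.assoc, cokernel.condition, comp_zero]

/-- The filtered system of quotients of the coproduct by its finite subcoproducts. -/
noncomputable def Qfun : Finset ι' ⥤ C where
  obj F := cokernel (leg E ι' F)
  map {F F'} h := cokernel.desc _ (cokernel.π (leg E ι' F'))
    (by
      apply biproduct.hom_ext'
      intro j
      rw [← Category.assoc, comp_zero]
      simp only [leg, biproduct.ι_desc]
      exact sigma_comp_cokernel_π E ι' (leOfHom h (Subtype.coe_prop (F.equivFin.symm j))))
  map_id F := by
    apply coequalizer.hom_ext
    simp
  map_comp {F F' F''} h h' := by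
    apply coequalizer.hom_ext
    simp

lemma π_Qmap {F F' : Finset ι'} (h : F ⟶ F') :
    cokernel.π (leg E ι' F) ≫ (Qfun E ι').map h = cokernel.π (leg E ι' F') := by
  simp [Qfun]

/-- The natural projection from the constant functor at the coproduct. -/
noncomputable def θπ : (Functor.const (Finset ι')).obj (∐ fun _ : ι' => E) ⟶ Qfun E ι' where
  app F := cokernel.π (leg E ι' F)
  naturality {F F'} h := by
    simp [π_Qmap, Qfun]

lemma isZero_colim_Qfun : IsZero (colimit (Qfun E ι')) := by
  haveI hepi : Epi (colimMap (θπ E ι')) := by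
    apply Preadditive.epi_of_cancel_zero
    intro R x hx
    apply colimit.hom_ext
    intro F
    rw [comp_zero]
    have h1 : (θπ E ι').app F ≫ colimit.ι (Qfun E ι') F ≫ x = 0 := by
      rw [← Category.assoc, ← ι_colimMap, Category.assoc, hx, comp_zero]
    haveI : Epi ((θπ E ι').app F) := by
      show Epi (cokernel.π (leg E ι' F))
      infer_instance
    exact zero_of_epi_comp ((θπ E ι').app F) h1
  have hzero : colimMap (θπ E ι') = 0 := by
    classical
    apply colimit.hom_ext
    intro F
    rw [ι_colimMap, comp_zero]
    apply colimit.hom_ext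
    intro j
    obtain ⟨i⟩ := j
    rw [comp_zero]
    have key2 : (θπ E ι').app F ≫ (Qfun E ι').map (homOfLE (Finset.subset_insert i F)) =
        (θπ E ι').app (insert i F) := π_Qmap E ι' _
    have key3 : Sigma.ι (fun _ : ι' => E) i ≫ (θπ E ι').app (insert i F) = 0 :=
      sigma_comp_cokernel_π E ι' (Finset.mem_insert_self i F)
    calc colimit.ι (Discrete.functor fun _ : ι' => E) ⟨i⟩ ≫
          (θπ E ι').app F ≫ colimit.ι (Qfun E ι') F
        = colimit.ι (Discrete.functor fun _ : ι' => E) ⟨i⟩ ≫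
            ((θπ E ι').app F ≫ (Qfun E ι').map (homOfLE (Finset.subset_insert i F))) ≫
            colimit.ι (Qfun E ι') (insert i F) := by
          rw [Category.assoc, colimit.w]
      _ = (Sigma.ι (fun _ : ι' => E) i ≫ (θπ E ι').app (insert i F)) ≫
            colimit.ι (Qfun E ι') (insert i F) := by rw [key2, ← Category.assoc]
      _ = 0 := by rw [key3, zero_comp]
  exact isZero_of_epi_zero (colimMap (θπ E ι')) hzero

/-- The main lemma: if `T` embeds in a coproduct of copies of `E`, `W ≤ T` is essential and
`g : T ⟶ E` vanishes on `W`, then `g = 0`. Uses AB5. -/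
lemma main_coprod [AB5 C] {E : C} (hInj : Injective E)
    (hdiv : ∀ f : E ⟶ E, f ≠ 0 → IsIso f) {ι' : Type v}
    (T : C) (m : T ⟶ ∐ (fun _ : ι' => E)) [Mono m] (W : Subobject T) (hW : Ess W)
    (g : T ⟶ E) (hg : W.arrow ≫ g = 0) : g = 0 := by
  -- Step 1: for every finite subcoproduct, the preimage of it in `T` is killed by `g`.
  have hF : ∀ F : Finset ι',
      (kernelSubobject (m ≫ cokernel.π (leg E ι' F))).arrow ≫ g = 0 := by
    intro F
    set K := kernelSubobject (m ≫ cokernel.π (leg E ι' F)) with hK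
    have hK0 : K.arrow ≫ m ≫ cokernel.π (leg E ι' F) = 0 := kernelSubobject_arrow_comp _
    set v := Abelian.monoLift (leg E ι' F) (K.arrow ≫ m)
      (by rw [Category.assoc]; exact hK0) with hvdef
    have hv : v ≫ leg E ι' F = K.arrow ≫ m := Abelian.monoLift_comp _ _ _
    haveI : Mono v := by
      have hm2 : Mono (v ≫ leg E ι' F) := by rw [hv]; exact mono_comp _ _
      exact mono_of_mono v (leg E ι' F)
    -- restrict essentialness of W to K
    have hW' := ess_restrict hW K
    set W' := kernelSubobject (K.arrow ≫ cokernel.π W.arrow) with hW'def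
    have hg' : W'.arrow ≫ K.arrow ≫ g = 0 := by
      have h0 : W'.arrow ≫ K.arrow ≫ cokernel.π W.arrow = 0 := by
        have := kernelSubobject_arrow_comp (K.arrow ≫ cokernel.π W.arrow)
        rwa [← Category.assoc] at this ⊢
      set w' := Abelian.monoLift W.arrow (W'.arrow ≫ K.arrow)
        (by rw [Category.assoc]; exact h0) with hw'def
      have hw' : w' ≫ W.arrow = W'.arrow ≫ K.arrow := Abelian.monoLift_comp _ _ _
      rw [← Category.assoc, ← hw', Category.assoc, hg, comp_zero]
    exact CL hInj hdiv F.card (K : C) v inferInstance W' hW' (K.arrow ≫ g) hg'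
  -- Step 2: assemble via the filtered colimit.
  set θ : (Functor.const (Finset ι')).obj T ⟶ Qfun E ι' :=
    (Functor.const (Finset ι')).map m ≫ θπ E ι' with hθ
  have hθapp : ∀ F : Finset ι', θ.app F = m ≫ cokernel.π (leg E ι' F) := fun F => rfl
  -- the colimit of `Qfun` is zero, so `colim.map θ = 0`
  have hColimθ : colim.map θ = 0 := by
    apply (isZero_colim_Qfun E ι').eq_of_tgt
  -- `colim` preserves the kernel of `θ`
  haveI : PreservesFiniteLimits (colim (J := Finset ι') (C := C)) :=
    inferInstance
  have l' := isLimitForkMapOfIsLimit' (colim (J := Finset ι') (C := C))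
    (kernel.condition θ) (kernelIsKernel θ)
  -- since `colim.map θ = 0`, the mapped kernel inclusion is a split epimorphism
  have hsplit := Fork.IsLimit.lift' l'
    (𝟙 (colim.obj ((Functor.const (Finset ι')).obj T)))
    (by rw [hColimθ])
  have hsec : hsplit.1 ≫ colim.map (kernel.ι θ) = 𝟙 _ := by
    have := hsplit.2
    simpa using this
  haveI hepi1 : Epi (colim.map (kernel.ι θ)) :=
    IsSplitEpi.mk' ⟨hsplit.1, hsec⟩ |>.epi
  -- the canonical comparison `colim (const T) ⟶ T`
  set cone : Cocone ((Functor.const (Finset ι')).obj T) :=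
    { pt := T, ι := { app := fun _ => 𝟙 T, naturality := by intros; simp } } with hcone
  set ε : colim.obj ((Functor.const (Finset ι')).obj T) ⟶ T := colimit.desc _ cone with hε
  have hιε : ∀ F : Finset ι',
      colimit.ι ((Functor.const (Finset ι')).obj T) F ≫ ε = 𝟙 T := fun F =>
    colimit.ι_desc cone F
  haveI hepi2 : Epi ε := IsSplitEpi.mk' ⟨colimit.ι _ (∅ : Finset ι'), hιε ∅⟩ |>.epi
  -- the composite kills `g`
  have hcomp : (colim.map (kernel.ι θ) ≫ ε) ≫ g = 0 := by
    apply colimit.hom_ext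
    intro F
    rw [comp_zero, ← Category.assoc, ← Category.assoc, colimit.ι_map]
    rw [Category.assoc, Category.assoc]
    have h1 : colimit.ι ((Functor.const (Finset ι')).obj T) F ≫ ε ≫ g = g := by
      rw [← Category.assoc, hιε F]
      exact Category.id_comp g
    rw [h1]
    -- now `(kernel.ι θ).app F ≫ g = 0`
    have h2 : (kernel.ι θ).app F ≫ θ.app F = 0 := by
      rw [← NatTrans.comp_app, kernel.condition θ]
      rfl
    rw [hθapp] at h2
    have h3 := factorThruKernelSubobject_comp_arrow
      (m ≫ cokernel.π (leg E ι' F)) ((kernel.ι θ).app F) h2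
    rw [← h3, Category.assoc, hF F, comp_zero]
  exact zero_of_epi_comp (colim.map (kernel.ι θ) ≫ ε) hcomp

end S8
end Machine
end Aux

section Star
variable {C : Type u} [Category.{v} C] [Abelian C] [HasColimits C] [AB5 C]

/-- If `L` is an essential subobject of `M`, any map `M ⟶ E` vanishing on `L` is zero. -/
lemma S8.essential_hom_vanish {E : C} (hE : IsBigInjective E) {M : C} {L : Subobject M}
    (hL : IsEssentialSubobject L) (f : M ⟶ E) (h0 : L.arrow ≫ f = 0) : f = 0 := by
  obtain ⟨ι'', S, p, hp⟩ := hE.generates M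
  haveI := hp
  set W := kernelSubobject (p ≫ cokernel.π L.arrow) with hW
  have hWess : S8.Ess W := S8.ess_pullback_epi p hL
  have hg : W.arrow ≫ (p ≫ f) = 0 := by
    have h1 : W.arrow ≫ p ≫ cokernel.π L.arrow = 0 := kernelSubobject_arrow_comp _
    set w := Abelian.monoLift L.arrow (W.arrow ≫ p) (by rw [Category.assoc]; exact h1) with hwdef
    have hw : w ≫ L.arrow = W.arrow ≫ p := Abelian.monoLift_comp _ _ _
    rw [← Category.assoc, ← hw, Category.assoc, h0, comp_zero]
  have hzero := S8.main_coprod hE.injective hE.division (S : C) S.arrow W hWess (p ≫ f) hg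
  exact zero_of_epi_comp p hzero

end Star

/-- Proposition 3.13. In an integral locally noetherian space with big
injective `E`, if `L` is an essential subobject of `M` then `rank L = rank M`. -/
theorem statement8 {C : Type u} [Category.{v} C] [Abelian C] [HasColimits C] [AB5 C]
    (hX : LocallyNoetherian C) (E : C) (hE : IsBigInjective E)
    (M : C) (L : Subobject M) (hL : IsEssentialSubobject L) :
    rank E (L : C) = rank E M := by
  haveI : Injective E := hE.injective
  have hsmul : ∀ (c : End E) (f : M ⟶ E), c • f = f ≫ c := fun _ _ => rfl
  let r : (M ⟶ E) →ₗ[End E] ((L : C) ⟶ E) :=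
    { toFun := fun f => L.arrow ≫ f
      map_add' := fun f g => Preadditive.comp_add _ _ _ _ _ _
      map_smul' := fun c f => by
        show L.arrow ≫ (f ≫ c) = (L.arrow ≫ f) ≫ c
        rw [Category.assoc]
      }
  have hbij : Function.Bijective r := by
    constructor
    · intro f g hfg
      have hsub : L.arrow ≫ (f - g) = 0 := by
        rw [Preadditive.comp_sub]
        rw [show L.arrow ≫ f = L.arrow ≫ g from hfg]
        exact sub_self _
      have := S8.essential_hom_vanish hE hL (f - g) hsub
      exact sub_eq_zero.1 this
    · intro h
      exact ⟨Injective.factorThru h L.arrow, Injective.comp_factorThru h L.arrow⟩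
  let e : (M ⟶ E) ≃ₗ[End E] ((L : C) ⟶ E) := LinearEquiv.ofBijective r hbij
  have := Order.krullDim_eq_of_orderIso (Submodule.orderIsoMapComap e)
  unfold rank
  exact this.symm
end
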